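/- For every natural number n > 2, the double inequality n/3 − 1/3 < (n/π)·arctan(√(4·tan²(π/n) + 3)) < n/3 + 1/3 holds. In particular, (n/π)·arctan(√(4·tan²(π/n) + 3)) is never a natural number k when n is not divisible by 3. -/

import Mathlib

open Real

private lemma tan_triple_aux (S C : ℝ) (hC : C ≠ 0) (hC2 : 3*C - 4*C^3 ≠ 0)
    (hp : S^2 + C^2 = 1) :
    ((4*S^3 - 3*S)/(3*C-4*C^3)) * (3*(S/C)^2 - 1) = (S/C)^3 - 3*(S/C) := by
  have hC3 : 3 - 4*C^2 ≠ 0 := by intro h; apply hC2; linear_combination C*h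
  field_simp
  linear_combination 12*S*(S^2-C^2)*hp

private lemma key_ineq_aux (T A : ℝ) (ht2 : 3 < T^2)
    (h4 : 4*A^2*(3*T^2-1)^2 = 4*(T^3-3*T)^2) : 4*A^2+3 < T^2 := by
  have h5 : 0 < (T ^ 2 - 3) * (5 * T ^ 4 + 6 * T ^ 2 + 1) := by
    nlinarith [sq_nonneg T, sq_nonneg (T^2)]
  have h6 : (T ^ 2 - 3 - 4 * A ^ 2) * (3 * T ^ 2 - 1) ^ 2
      = (T ^ 2 - 3) * (5 * T ^ 4 + 6 * T ^ 2 + 1) := by linear_combination -h4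
  have h7 : 0 < (T ^ 2 - 3 - 4 * A ^ 2) * (3 * T ^ 2 - 1) ^ 2 := h6 ▸ h5
  nlinarith [h7, sq_nonneg (3 * T ^ 2 - 1)]

theorem arctan_double_inequality (n : ℕ) (hn : 2 < n) :
    ((n : ℝ) / 3 - 1 / 3 <
        ((n : ℝ) / π) * Real.arctan (Real.sqrt (4 * Real.tan (π / n) ^ 2 + 3)) ∧
      ((n : ℝ) / π) * Real.arctan (Real.sqrt (4 * Real.tan (π / n) ^ 2 + 3)) <
        (n : ℝ) / 3 + 1 / 3) ∧
    (¬ 3 ∣ n → ∀ k : ℕ,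
      ((n : ℝ) / π) * Real.arctan (Real.sqrt (4 * Real.tan (π / n) ^ 2 + 3)) ≠ (k : ℝ)) := by
  have hn3 : (3 : ℝ) ≤ (n : ℝ) := by exact_mod_cast hn
  have hπ : (0 : ℝ) < π := Real.pi_pos
  set x : ℝ := π / n with hxdef
  have hx0 : 0 < x := div_pos hπ (by linarith)
  have hx3 : x ≤ π / 3 := by
    rw [hxdef, div_le_div_iff₀ (by linarith) (by norm_num)]
    nlinarith
  have hx2 : x < π / 2 := lt_of_le_of_lt hx3 (by linarith)
  set s : ℝ := Real.sqrt (4 * Real.tan x ^ 2 + 3) with hsdef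
  have hs3 : Real.sqrt 3 ≤ s := Real.sqrt_le_sqrt (by nlinarith [sq_nonneg (Real.tan x)])
  -- Lower bound
  have hlow : (π - x) / 3 < Real.arctan s := by
    have h1 : Real.tan ((π - x) / 3) < Real.sqrt 3 := by
      rw [← Real.tan_pi_div_three]
      exact Real.tan_lt_tan_of_nonneg_of_lt_pi_div_two (by linarith) (by linarith) (by linarith)
    have h2 : Real.tan ((π - x) / 3) < s := lt_of_lt_of_le h1 hs3
    have h3 := Real.arctan_strictMono h2
    rwa [Real.arctan_tan (by linarith) (by linarith)] at h3
  -- Upper bound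
  have hup : Real.arctan s < (π + x) / 3 := by
    set θ : ℝ := (π + x) / 3 with hθdef
    have hθ1 : π / 3 < θ := by rw [hθdef]; linarith
    have hθ2 : θ < π / 2 := by rw [hθdef]; linarith
    set t : ℝ := Real.tan θ with htdef
    have ht3 : Real.sqrt 3 < t := by
      rw [htdef, ← Real.tan_pi_div_three]
      exact Real.tan_lt_tan_of_nonneg_of_lt_pi_div_two (by positivity) hθ2 hθ1
    have hsq3 : Real.sqrt 3 ^ 2 = 3 := Real.sq_sqrt (by norm_num)
    have h30 : (0:ℝ) ≤ Real.sqrt 3 := Real.sqrt_nonneg 3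
    have ht0 : 0 < t := h30.trans_lt ht3
    have ht2 : 3 < t ^ 2 := by nlinarith
    have hcosθ : 0 < Real.cos θ := Real.cos_pos_of_mem_Ioo ⟨by linarith, hθ2⟩
    have hcosx : 0 < Real.cos x := Real.cos_pos_of_mem_Ioo ⟨by linarith, hx2⟩
    have h3θ : 3 * θ = x + π := by rw [hθdef]; ring
    have hsx : Real.sin x = 4 * Real.sin θ ^ 3 - 3 * Real.sin θ := by
      have h := Real.sin_three_mul θ
      rw [h3θ, Real.sin_add_pi] at h
      linarith
    have hcx : Real.cos x = 3 * Real.cos θ - 4 * Real.cos θ ^ 3 := by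
      have h := Real.cos_three_mul θ
      rw [h3θ, Real.cos_add_pi] at h
      linarith
    have hpyth : Real.sin θ ^ 2 + Real.cos θ ^ 2 = 1 := Real.sin_sq_add_cos_sq θ
    have htanx : Real.tan x * (3 * t ^ 2 - 1) = t ^ 3 - 3 * t := by
      have h2 : 3 * Real.cos θ - 4 * Real.cos θ ^ 3 ≠ 0 := by
        rw [← hcx]; exact ne_of_gt hcosx
      have haux := tan_triple_aux (Real.sin θ) (Real.cos θ) (ne_of_gt hcosθ) h2 hpyth
      rw [Real.tan_eq_sin_div_cos x, hsx, hcx, htdef, Real.tan_eq_sin_div_cos θ]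
      convert haux using 3 <;> ring
    have h4 : 4 * Real.tan x ^ 2 * (3 * t ^ 2 - 1) ^ 2 = 4 * (t ^ 3 - 3 * t) ^ 2 := by
      rw [← htanx]; ring
    have hkey : 4 * Real.tan x ^ 2 + 3 < t ^ 2 := by
      have := key_ineq_aux t (Real.tan x) ht2 (by linarith [h4])
      linarith
    have hslt : s < t := by
      have hs0 : 0 ≤ s := Real.sqrt_nonneg _
      have hss : s ^ 2 < t ^ 2 := by
        rw [hsdef, Real.sq_sqrt (by positivity)]; exact hkey
      exact lt_of_pow_lt_pow_left₀ 2 (le_of_lt ht0) hss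
    have h8 := Real.arctan_strictMono hslt
    rwa [htdef, Real.arctan_tan (by linarith) hθ2] at h8
  have hnπ : 0 < (n : ℝ) / π := by positivity
  have heqL : (n : ℝ) / π * ((π - x) / 3) = (n : ℝ) / 3 - 1 / 3 := by
    rw [hxdef]; field_simp
  have heqR : (n : ℝ) / π * ((π + x) / 3) = (n : ℝ) / 3 + 1 / 3 := by
    rw [hxdef]; field_simp
  have hL : (n : ℝ) / 3 - 1 / 3 < ((n : ℝ) / π) * Real.arctan s := by
    have h := (mul_lt_mul_iff_right₀ hnπ).2 hlow
    rw [heqL] at h; exact h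
  have hR : ((n : ℝ) / π) * Real.arctan s < (n : ℝ) / 3 + 1 / 3 := by
    have h := (mul_lt_mul_iff_right₀ hnπ).2 hup
    rw [heqR] at h; exact h
  refine ⟨⟨hL, hR⟩, fun hdvd k hk => ?_⟩
  rw [hk] at hL hR
  have hA' : n < 3 * k + 1 := by
    exact_mod_cast (by push_cast; linarith : ((n:ℕ):ℝ) < ((3*k+1:ℕ):ℝ))
  have hB' : 3 * k < n + 1 := by
    exact_mod_cast (by push_cast; linarith : ((3*k:ℕ):ℝ) < ((n+1:ℕ):ℝ))
  exact hdvd ⟨k, by omega⟩
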